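/- Let T be an N×N complex matrix with T^n = 0 for some n ≥ 2. Then the numerical radius of T satisfies ω(T) ≤ ‖T‖ · cos(π/(n+1)). -/

import Mathlib

open Matrix

noncomputable section

/-- The `n × n` nilpotent shift matrix: `(S_n)_{ij} = 1` if `i = j + 1`, else `0`. -/
def shiftMatrix (n : ℕ) : Matrix (Fin n) (Fin n) ℂ :=
  Matrix.of fun i j => if (i : ℕ) = (j : ℕ) + 1 then 1 else 0

/-- The rank-`k` numerical range of a square complex matrix `T`:
all `λ` such that `P * T * P = λ • P` for some orthogonal projection `P` of rank `k`. -/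
def rankNumRange {m : Type*} [Fintype m] (k : ℕ) (T : Matrix m m ℂ) : Set ℂ :=
  {lam : ℂ | ∃ P : Matrix m m ℂ,
    P * P = P ∧ Pᴴ = P ∧ P.rank = k ∧ P * T * P = lam • P}

/-- The numerical radius of a square complex matrix:
`ω(T) = sup {|⟨Tx, x⟩| : ‖x‖ = 1}`. -/
def numRadius {N : ℕ} (T : Matrix (Fin N) (Fin N) ℂ) : ℝ :=
  sSup {r : ℝ | ∃ x : Fin N → ℂ,
    ∑ i, ‖x i‖ ^ 2 = 1 ∧ r = ‖star x ⬝ᵥ (T *ᵥ x)‖}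

/-- Weighted AM–GM: `2AB ≤ cA² + c⁻¹B²` for `c > 0`. -/
private lemma amgm_aux (c A B : ℝ) (hc : 0 < c) :
    2 * (A * B) ≤ c * A ^ 2 + c⁻¹ * B ^ 2 := by
  have hc' : 0 < c⁻¹ := inv_pos.mpr hc
  have h := mul_nonneg hc'.le (sq_nonneg (c * A - B))
  have expand : c⁻¹ * (c * A - B) ^ 2 = c * A ^ 2 - 2 * (A * B) + c⁻¹ * B ^ 2 := by
    field_simp
    ring
  rw [expand] at h
  linarith

open Real in
/-- The tridiagonal quadratic form bound:
`∑_{k<n} t_k t_{k+1} ≤ cos (π/(n+1)) ∑_{k<n} t_k²` when all `t_k ≥ 0` and `t_n = 0`. -/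
private lemma tridiag_bound (n : ℕ) (t : ℕ → ℝ)
    (ht : ∀ k, 0 ≤ t k) (htn : t n = 0) :
    ∑ k ∈ Finset.range n, t k * t (k + 1) ≤
      Real.cos (π / (n + 1)) * ∑ k ∈ Finset.range n, t k ^ 2 := by
  rcases Nat.eq_zero_or_pos n with rfl | hn
  · simp
  obtain ⟨m, rfl⟩ : ∃ m, n = m + 1 := ⟨n - 1, (Nat.succ_pred_eq_of_pos hn).symm⟩
  set θ : ℝ := π / (↑(m + 1) + 1) with hθ
  set r : ℝ := Real.cos θ with hr
  have hθpos : 0 < θ := by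
    rw [hθ]; positivity
  have hθπ : ((m : ℝ) + 1 + 1) * θ = π := by
    rw [hθ]
    push_cast
    field_simp
  set a : ℕ → ℝ := fun k => Real.sin ((k + 1) * θ) with ha
  have hapos : ∀ k, k ≤ m → 0 < a k := by
    intro k hk
    apply Real.sin_pos_of_pos_of_lt_pi
    · positivity
    · rw [← hθπ]
      apply mul_lt_mul_of_pos_right _ hθpos
      have : (k : ℝ) ≤ m := by exact_mod_cast hk
      linarith
  have hkey : ∀ k : ℕ, a (k + 1) + Real.sin (k * θ) = 2 * r * a k := by
    intro k
    simp only [ha, hr]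
    push_cast
    rw [show ((k : ℝ) + 1 + 1) * θ = ((k : ℝ) + 1) * θ + θ by ring,
        show (k : ℝ) * θ = ((k : ℝ) + 1) * θ - θ by ring,
        Real.sin_add, Real.sin_sub]
    ring
  have hatop : a (m + 1) = 0 := by
    simp only [ha]
    push_cast
    rw [hθπ, Real.sin_pi]
  set c : ℕ → ℝ := fun k => a (k + 1) / a k with hc
  set d : ℕ → ℝ := fun k => Real.sin (k * θ) / a k with hd
  have hcd : ∀ k, k ≤ m → c k + d k = 2 * r := by
    intro k hk
    simp only [hc, hd]
    rw [← add_div, hkey k, mul_div_assoc, div_self (hapos k hk).ne', mul_one]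
  have step1 : ∑ k ∈ Finset.range (m + 1), t k * t (k + 1)
      = ∑ k ∈ Finset.range m, t k * t (k + 1) := by
    rw [Finset.sum_range_succ, htn, mul_zero, add_zero]
  have step2 : ∀ k ∈ Finset.range m,
      2 * (t k * t (k + 1)) ≤ c k * t k ^ 2 + d (k + 1) * t (k + 1) ^ 2 := by
    intro k hk
    rw [Finset.mem_range] at hk
    have hck : 0 < c k := div_pos (hapos (k + 1) hk) (hapos k (le_of_lt hk))
    have hsin : Real.sin (((k + 1 : ℕ) : ℝ) * θ) = a k := by
      simp only [ha]
      push_cast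
      ring_nf
    have hdk : d (k + 1) = (c k)⁻¹ := by
      simp only [hc, hd, inv_div, hsin]
    rw [hdk]
    exact amgm_aux _ _ _ hck
  have e1 : ∑ k ∈ Finset.range (m + 1), (c k + d k) * t k ^ 2
      = ∑ k ∈ Finset.range m, (c k * t k ^ 2 + d (k + 1) * t (k + 1) ^ 2) := by
    have hcm : c m * t m ^ 2 = 0 := by
      simp only [hc, hatop, zero_div, zero_mul]
    have hd0 : d 0 * t 0 ^ 2 = 0 := by
      simp only [hd]
      norm_num
    simp_rw [add_mul]
    rw [Finset.sum_add_distrib, Finset.sum_add_distrib,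
      Finset.sum_range_succ (f := fun k => c k * t k ^ 2), hcm, add_zero,
      Finset.sum_range_succ' (f := fun k => d k * t k ^ 2), hd0, add_zero]
  have e2 : ∑ k ∈ Finset.range (m + 1), (c k + d k) * t k ^ 2
      = 2 * r * ∑ k ∈ Finset.range (m + 1), t k ^ 2 := by
    rw [Finset.mul_sum]
    apply Finset.sum_congr rfl
    intro k hk
    rw [Finset.mem_range, Nat.lt_succ_iff] at hk
    rw [hcd k hk]
  have chain : 2 * ∑ k ∈ Finset.range (m + 1), t k * t (k + 1)
      ≤ 2 * r * ∑ k ∈ Finset.range (m + 1), t k ^ 2 := by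
    rw [step1, Finset.mul_sum, ← e2, e1]
    exact Finset.sum_le_sum step2
  have : r * ∑ k ∈ Finset.range (m + 1), t k ^ 2
      = Real.cos (π / (↑(m + 1) + 1)) * ∑ k ∈ Finset.range (m + 1), t k ^ 2 := by
    rw [hr, hθ]
  linarith [chain, this]

open scoped InnerProductSpace in
/-- Cauchy–Schwarz for the positive semidefinite form `(u,w) ↦ ⟪u,w⟫ - ⟪Tu,Tw⟫`
associated with a contraction `T`. -/
private lemma cs_contraction {E : Type*} [NormedAddCommGroup E] [InnerProductSpace ℂ E]
    (T : E →L[ℂ] E) (hT : ∀ y, ‖T y‖ ≤ ‖y‖) (u w : E) :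
    ‖⟪u, w⟫_ℂ - ⟪T u, T w⟫_ℂ‖ ≤
      Real.sqrt (‖u‖ ^ 2 - ‖T u‖ ^ 2) * Real.sqrt (‖w‖ ^ 2 - ‖T w‖ ^ 2) := by
  set α : ℝ := ‖u‖ ^ 2 - ‖T u‖ ^ 2 with hα'
  set γ : ℝ := ‖w‖ ^ 2 - ‖T w‖ ^ 2 with hγ'
  have hα : 0 ≤ α := sub_nonneg.mpr (pow_le_pow_left₀ (norm_nonneg _) (hT u) 2)
  have hγ : 0 ≤ γ := sub_nonneg.mpr (pow_le_pow_left₀ (norm_nonneg _) (hT w) 2)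
  set b : ℂ := ⟪u, w⟫_ℂ - ⟪T u, T w⟫_ℂ with hb'
  have hquad : ∀ z : ℂ, 0 ≤ α + ‖z‖ ^ 2 * γ + 2 * (z * b).re := by
    intro z
    have h0 : (0 : ℝ) ≤ ‖u + z • w‖ ^ 2 - ‖T (u + z • w)‖ ^ 2 :=
      sub_nonneg.mpr (pow_le_pow_left₀ (norm_nonneg _) (hT _) 2)
    have e1 : ‖u + z • w‖ ^ 2
        = ‖u‖ ^ 2 + 2 * (z * ⟪u, w⟫_ℂ).re + ‖z‖ ^ 2 * ‖w‖ ^ 2 := by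
      rw [norm_add_sq (𝕜 := ℂ), inner_smul_right, norm_smul, mul_pow]
      norm_num
    have e2 : ‖T (u + z • w)‖ ^ 2
        = ‖T u‖ ^ 2 + 2 * (z * ⟪T u, T w⟫_ℂ).re + ‖z‖ ^ 2 * ‖T w‖ ^ 2 := by
      rw [map_add, _root_.map_smul, norm_add_sq (𝕜 := ℂ), inner_smul_right, norm_smul, mul_pow]
      norm_num
    have e3 : (z * b).re = (z * ⟪u, w⟫_ℂ).re - (z * ⟪T u, T w⟫_ℂ).re := by
      rw [hb', mul_sub, Complex.sub_re]
    rw [e1, e2] at h0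
    rw [e3, hα', hγ']
    ring_nf
    ring_nf at h0
    linarith
  have habs : ‖b‖ ^ 2 ≤ α * γ := by
    rcases eq_or_ne b 0 with hb | hb
    · simp [hb]
      exact mul_nonneg hα hγ
    · have hbpos : 0 < ‖b‖ := norm_pos_iff.mpr hb
      have hq : ∀ lam : ℝ, 0 ≤ γ * (lam * lam) + (-(2 * ‖b‖)) * lam + α := by
        intro lam
        have hz := hquad ((-(lam : ℂ)) * (starRingEnd ℂ b) / (‖b‖ : ℂ))
        have hzb : ((-(lam : ℂ)) * (starRingEnd ℂ b) / (‖b‖ : ℂ)) * b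
            = ((-(lam * ‖b‖) : ℝ) : ℂ) := by
          have hcb : (starRingEnd ℂ b) * b = ((‖b‖ ^ 2 : ℝ) : ℂ) := by
            rw [mul_comm, Complex.mul_conj]
            rw [Complex.sq_norm]
          have hbne : ((‖b‖ : ℝ) : ℂ) ≠ 0 := by exact_mod_cast hbpos.ne'
          rw [div_mul_eq_mul_div, mul_assoc, hcb, div_eq_iff hbne]
          push_cast
          ring
        have hznorm : ‖(-(lam : ℂ)) * (starRingEnd ℂ b) / (‖b‖ : ℂ)‖ ^ 2
            = lam * lam := by
          rw [norm_div, norm_mul, norm_neg]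
          simp only [Complex.norm_real, Real.norm_eq_abs, Complex.norm_conj]
          rw [abs_of_nonneg (norm_nonneg b), mul_div_assoc,
            div_self hbpos.ne', mul_one, sq_abs]
          ring
        rw [hzb, hznorm] at hz
        simp only [Complex.ofReal_re] at hz
        linarith
      have hd := discrim_le_zero hq
      rw [discrim] at hd
      nlinarith [hd]
  calc ‖b‖ = Real.sqrt (‖b‖ ^ 2) := by
        rw [Real.sqrt_sq (norm_nonneg b)]
    _ ≤ Real.sqrt (α * γ) := Real.sqrt_le_sqrt habs
    _ = Real.sqrt α * Real.sqrt γ := Real.sqrt_mul hα γ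

open Real in
open scoped InnerProductSpace in
/-- Core Haagerup–de la Harpe estimate: if `T` is a linear contraction with `(T^n) x = 0`
and `‖x‖ = 1`, then `|⟪x, T x⟫| ≤ cos (π/(n+1))`. -/
private lemma core_hdlh {E : Type*} [NormedAddCommGroup E] [InnerProductSpace ℂ E]
    (T : E →L[ℂ] E) (hT : ∀ y, ‖T y‖ ≤ ‖y‖) (n : ℕ) (hn : 1 ≤ n)
    (x : E) (hx : ‖x‖ = 1) (hxn : (T ^ n) x = 0) :
    ‖⟪x, T x⟫_ℂ‖ ≤ Real.cos (π / (n + 1)) := by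
  set v : ℕ → E := fun k => (T ^ k) x with hv'
  have hv0 : v 0 = x := by simp [hv']
  have hv : ∀ k, v (k + 1) = T (v k) := by
    intro k
    simp only [hv', pow_succ']
    rfl
  have hvn : v n = 0 := hxn
  have hmono : ∀ k, ‖v (k + 1)‖ ≤ ‖v k‖ := fun k => by rw [hv k]; exact hT _
  set t : ℕ → ℝ := fun k => Real.sqrt (‖v k‖ ^ 2 - ‖v (k + 1)‖ ^ 2) with ht'
  have ht : ∀ k, 0 ≤ t k := fun k => Real.sqrt_nonneg _
  have htsq : ∀ k, t k ^ 2 = ‖v k‖ ^ 2 - ‖v (k + 1)‖ ^ 2 := by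
    intro k
    exact Real.sq_sqrt (sub_nonneg.mpr (pow_le_pow_left₀ (norm_nonneg _) (hmono k) 2))
  have htn : t n = 0 := by
    have hvn1 : v (n + 1) = 0 := by rw [hv, hvn, map_zero]
    simp [ht', hvn, hvn1]
  have hsum : ∑ k ∈ Finset.range n, t k ^ 2 = 1 := by
    have := Finset.sum_range_sub' (fun k => ‖v k‖ ^ 2) n
    simp_rw [htsq]
    rw [this, hv0, hvn, hx]
    norm_num
  set c : ℕ → ℂ := fun k => ⟪v k, v (k + 1)⟫_ℂ with hc'
  have hcn : c n = 0 := by simp [hc', hvn]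
  have htele : c 0 = ∑ k ∈ Finset.range n, (c k - c (k + 1)) := by
    rw [Finset.sum_range_sub' c n, hcn, sub_zero]
  have hterm : ∀ k, ‖c k - c (k + 1)‖ ≤ t k * t (k + 1) := by
    intro k
    have h1 : c (k + 1) = ⟪T (v k), T (v (k + 1))⟫_ℂ := by
      simp only [hc']
      rw [← hv, ← hv]
    have h2 := cs_contraction T hT (v k) (v (k + 1))
    rw [← h1] at h2
    simp only [hc']
    refine le_trans h2 ?_
    rw [← hv, ← hv]
  have habs : ‖c 0‖ ≤ ∑ k ∈ Finset.range n, t k * t (k + 1) := by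
    rw [htele]
    refine le_trans (norm_sum_le _ _) ?_
    exact Finset.sum_le_sum fun k _ => hterm k
  have hfin := tridiag_bound n t ht htn
  rw [hsum, mul_one] at hfin
  have hc0 : c 0 = ⟪x, T x⟫_ℂ := by
    simp only [hc']
    rw [hv0, hv, hv0]
  rw [← hc0]
  exact le_trans habs hfin

set_option maxHeartbeats 1000000 in
set_option synthInstance.maxHeartbeats 400000 in
open Real in
theorem numRadius_le_opNorm_mul_cos_of_nilpotent
    (N n : ℕ) (hn : 2 ≤ n) (T : Matrix (Fin N) (Fin N) ℂ) (hTn : T ^ n = 0) :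
    numRadius T ≤ ‖Matrix.toEuclideanCLM (𝕜 := ℂ) T‖ * cos (π / (n + 1)) := by
  have hcos : 0 ≤ cos (π / (n + 1)) := by
    apply Real.cos_nonneg_of_mem_Icc
    constructor
    · have h1 : 0 < π / ((n : ℝ) + 1) := by positivity
      linarith [Real.pi_pos]
    · apply div_le_div_of_nonneg_left Real.pi_pos.le (by norm_num) ?_
      have : (2 : ℝ) ≤ (n : ℝ) := by exact_mod_cast hn
      linarith
  apply Real.sSup_le
  · rintro r ⟨x, hx1, rfl⟩
    set f := Matrix.toEuclideanCLM (𝕜 := ℂ) T with hf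
    set M : ℝ := ‖f‖ with hM
    set x' : EuclideanSpace ℂ (Fin N) := (WithLp.equiv 2 (Fin N → ℂ)).symm x with hx'
    have hx'norm : ‖x'‖ = 1 := by
      rw [EuclideanSpace.norm_eq]
      have : ∀ i, ‖x' i‖ = ‖x i‖ := fun i => rfl
      simp_rw [this, hx1, Real.sqrt_one]
    have hfx : f x' = (WithLp.equiv 2 (Fin N → ℂ)).symm (T *ᵥ x) := by
      rw [hf, hx', WithLp.equiv_symm_apply, toEuclideanCLM_toLp]
    have hinner : (inner ℂ x' (f x') : ℂ) = star x ⬝ᵥ (T *ᵥ x) := by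
      rw [hfx]
      simp only [PiLp.inner_apply, RCLike.inner_apply, dotProduct, Pi.star_apply]
      exact Finset.sum_congr rfl fun i _ => mul_comm _ _
    rcases eq_or_lt_of_le (norm_nonneg f) with hM0 | hMpos
    · have hfx0 : f x' = 0 := by
        have h := f.le_opNorm x'
        rw [← hM0, zero_mul] at h
        exact norm_le_zero_iff.mp h
      rw [← hinner, hfx0, inner_zero_right, norm_zero]
      positivity
    · set g : EuclideanSpace ℂ (Fin N) →L[ℂ] EuclideanSpace ℂ (Fin N)
        := ((M : ℂ))⁻¹ • f with hg
      have hMne : (M : ℝ) ≠ 0 := ne_of_gt hMpos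
      have hnormM : ‖((M : ℂ))⁻¹‖ = M⁻¹ := by
        rw [norm_inv, Complex.norm_real, Real.norm_of_nonneg hMpos.le]
      have hg1 : ∀ y, ‖g y‖ ≤ ‖y‖ := by
        intro y
        rw [hg, ContinuousLinearMap.smul_apply, norm_smul, hnormM]
        calc M⁻¹ * ‖f y‖ ≤ M⁻¹ * (M * ‖y‖) :=
              mul_le_mul_of_nonneg_left (f.le_opNorm y) (inv_nonneg.mpr hMpos.le)
          _ = ‖y‖ := by field_simp
      have hfn : f ^ n = 0 := by
        rw [hf, ← _root_.map_pow, hTn, _root_.map_zero]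
      have hgn : (g ^ n) x' = 0 := by
        rw [hg, smul_pow, hfn]
        simp
      have hcore := core_hdlh g hg1 n (le_trans one_le_two hn) x' hx'norm hgn
      have hginner : (inner ℂ x' (g x') : ℂ) = ((M : ℂ))⁻¹ * inner ℂ x' (f x') := by
        rw [hg, ContinuousLinearMap.smul_apply, inner_smul_right]
      rw [hginner, norm_mul] at hcore
      have habsM : ‖((M : ℂ))⁻¹‖ = M⁻¹ := by
        rw [norm_inv, Complex.norm_real, Real.norm_of_nonneg hMpos.le]
      rw [habsM] at hcore
      rw [← hinner]
      calc ‖(inner ℂ x' (f x') : ℂ)‖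
          = M * (M⁻¹ * ‖(inner ℂ x' (f x') : ℂ)‖) := by field_simp
        _ ≤ M * cos (π / (n + 1)) := mul_le_mul_of_nonneg_left hcore hMpos.le
  · exact mul_nonneg (norm_nonneg _) hcos
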